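/- If b > 0 and x : [t0, tmax) → ℝ is a C¹ function satisfying x'(t) > b·x(t)³ with x(t0) = x0 > 0, and x is defined on all of [t0, tmax), then tmax - t0 ≤ 1/(2b·x0²). -/

import Mathlib

theorem stmt_1 (b t0 tmax x0 : ℝ) (x x' : ℝ → ℝ)
    (hb : 0 < b) (ht : t0 < tmax)
    (hC1 : ∀ t ∈ Set.Ico t0 tmax, HasDerivAt x (x' t) t)
    (hcont : ContinuousOn x' (Set.Ico t0 tmax))
    (hineq : ∀ t ∈ Set.Ico t0 tmax, x' t > b * (x t) ^ 3)
    (hx0 : x t0 = x0) (hx0pos : 0 < x0) :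
    tmax - t0 ≤ 1 / (2 * b * x0 ^ 2) := by
  -- continuity of x on closed subintervals
  have hcx : ∀ t1 ∈ Set.Ico t0 tmax, ContinuousOn x (Set.Icc t0 t1) := by
    intro t1 ht1 t ht'
    exact ((hC1 t ⟨ht'.1, lt_of_le_of_lt ht'.2 ht1.2⟩).continuousAt).continuousWithinAt
  -- positivity of x
  have hpos : ∀ t ∈ Set.Ico t0 tmax, 0 < x t := by
    intro t1 ht1
    by_contra h
    push_neg at h
    set S : Set ℝ := {t ∈ Set.Icc t0 t1 | x t ≤ 0} with hSdef
    have hne : S.Nonempty := ⟨t1, ⟨ht1.1, le_refl t1⟩, h⟩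
    have hbdd : BddBelow S := ⟨t0, fun t htS => htS.1.1⟩
    have hclosed : IsClosed S := by
      have : S = Set.Icc t0 t1 ∩ x ⁻¹' Set.Iic 0 := by
        ext t; simp [hSdef, Set.mem_Iic, and_comm]
      rw [this]
      exact (hcx t1 ht1).preimage_isClosed_of_isClosed isClosed_Icc isClosed_Iic
    set s := sInf S with hs
    have hsS : s ∈ S := hclosed.csInf_mem hne hbdd
    have hst0 : t0 < s := by
      rcases lt_or_eq_of_le hsS.1.1 with h' | h'
      · exact h'
      · exfalso; have := hsS.2; rw [← h', hx0] at this; linarith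
    have hxposleft : ∀ t ∈ Set.Ico t0 s, 0 < x t := by
      intro t htm
      by_contra h'
      push_neg at h'
      have : t ∈ S := ⟨⟨htm.1, le_trans htm.2.le hsS.1.2⟩, h'⟩
      have h2 := csInf_le hbdd this
      have := htm.2
      simp only [hs] at *
      linarith
    -- MVT on [t0, s]
    have hsub : Set.Icc t0 s ⊆ Set.Icc t0 t1 := Set.Icc_subset_Icc le_rfl hsS.1.2
    have hmvt := exists_hasDerivAt_eq_slope x x' hst0 ((hcx t1 ht1).mono hsub)
      (fun t htm => hC1 t ⟨htm.1.le, lt_trans (htm.2.trans_le hsS.1.2) ht1.2⟩)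
    obtain ⟨ξ, hξ, hξeq⟩ := hmvt
    have hξmem : ξ ∈ Set.Ico t0 tmax :=
      ⟨hξ.1.le, lt_of_lt_of_le (hξ.2.trans_le hsS.1.2) ht1.2.le⟩
    have hxξ : 0 < x ξ := hxposleft ξ ⟨hξ.1.le, hξ.2⟩
    have h1 : x' ξ > b * (x ξ) ^ 3 := hineq ξ hξmem
    have h2 : x' ξ > 0 := lt_trans (by positivity) h1
    rw [hξeq] at h2
    have : (x s - x t0) / (s - t0) ≤ 0 := by
      apply div_nonpos_of_nonpos_of_nonneg
      · rw [hx0]; linarith [hsS.2]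
      · linarith
    linarith
  -- the key bound for each t in (t0, tmax)
  have key : ∀ t ∈ Set.Ico t0 tmax, t0 < t → t - t0 < 1 / (2 * b * x0 ^ 2) := by
    intro t htm ht0t
    set y : ℝ → ℝ := fun u => (x u ^ 2)⁻¹ + 2 * b * u with hy
    have hderiv : ∀ s ∈ Set.Ico t0 tmax,
        HasDerivAt y (-(2 * x s ^ 1 * x' s) / (x s ^ 2) ^ 2 + 2 * b) s := by
      intro s hsm
      have hxs := hpos s hsm
      have h1 : HasDerivAt (fun u => x u ^ 2) (2 * x s ^ 1 * x' s) s := by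
        simpa using (hC1 s hsm).fun_pow 2
      have h2 := h1.inv (by positivity : x s ^ 2 ≠ 0)
      have h3 : HasDerivAt (fun u : ℝ => 2 * b * u) (2 * b) s := by
        simpa using (hasDerivAt_id s).const_mul (2 * b)
      exact h2.add h3
    have hanti : StrictAntiOn y (Set.Icc t0 t) := by
      apply strictAntiOn_of_deriv_neg
      · exact convex_Icc t0 t
      · intro u hu
        have hum : u ∈ Set.Ico t0 tmax := ⟨hu.1, lt_of_le_of_lt hu.2 htm.2⟩
        exact ((hderiv u hum).continuousAt).continuousWithinAt
      · intro u hu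
        rw [interior_Icc] at hu
        have hum : u ∈ Set.Ico t0 tmax := ⟨hu.1.le, hu.2.le.trans_lt htm.2⟩
        rw [(hderiv u hum).deriv]
        have hxu := hpos u hum
        have hin := hineq u hum
        rw [show ((x u ^ 2) ^ 2 : ℝ) = x u ^ 4 by ring]
        have h4 : (0:ℝ) < x u ^ 4 := by positivity
        have h5 : 2 * b < (2 * x u ^ 1 * x' u) / x u ^ 4 := by
          rw [lt_div_iff₀ h4]
          nlinarith [mul_lt_mul_of_pos_left hin hxu, pow_pos hxu 4]
        rw [neg_div]
        linarith
    have hlt : y t < y t0 := hanti ⟨le_rfl, ht0t.le⟩ ⟨ht0t.le, le_rfl⟩ ht0t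
    have hxt := hpos t htm
    have hinv : (0:ℝ) < (x t ^ 2)⁻¹ := by positivity
    have hineq2 : 2 * b * (t - t0) < (x0 ^ 2)⁻¹ := by
      have := hlt
      simp only [hy, hx0] at this
      linarith
    rw [lt_div_iff₀ (by positivity : (0:ℝ) < 2 * b * x0 ^ 2)]
    rw [inv_eq_one_div] at hineq2
    rw [lt_div_iff₀ (by positivity : (0:ℝ) < x0 ^ 2)] at hineq2
    nlinarith
  by_contra hcon
  push_neg at hcon
  set c := 1 / (2 * b * x0 ^ 2) with hc
  have hcpos : 0 < c := by positivity
  have hmem : t0 + c ∈ Set.Ico t0 tmax := ⟨by linarith, by linarith⟩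
  have := key (t0 + c) hmem (by linarith)
  linarith
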